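/- arXiv:1902.03805 — 3 statements merged into one kernel-verified Lean document; each statement's English description precedes it below -/
import Mathlib

section
/- Let S be a separable metric space and let X_d (d ∈ ℕ) and X be random elements of S defined on a common probability space (Ω,P). Then X_d converges to X in probability (i.e. for every ε > 0, P(dist(X_d,X) > ε) → 0) if and only if the laws of the pairs (X_d, X) on S × S converge narrowly to the law of (X, X). -/
open MeasureTheory ProbabilityTheory Filter Topology

/-- Let `S` be a separable metric space and `X_d`, `X` random elements of `S` on a common
probability space. Then `X_d → X` in probability if and only if the laws of the pairs
`(X_d, X)` converge narrowly on `S × S` to the law of `(X, X)`. -/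
theorem tendstoInMeasure_iff_narrow_tendsto_pair_law
    {S : Type} [MetricSpace S] [TopologicalSpace.SeparableSpace S]
    [MeasurableSpace S] [BorelSpace S]
    {Ω : Type} [MeasurableSpace Ω] (P : Measure Ω) [IsProbabilityMeasure P]
    (X : ℕ → Ω → S) (X₀ : Ω → S)
    (hX : ∀ d, Measurable (X d)) (hX₀ : Measurable X₀) :
    (∀ ε : ℝ, 0 < ε →
        Tendsto (fun d => P {ω | ε < dist (X d ω) (X₀ ω)}) atTop (𝓝 0)) ↔
      (∀ φ : BoundedContinuousFunction (S × S) ℝ,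
        Tendsto (fun d => ∫ x, φ x ∂(P.map (fun ω => (X d ω, X₀ ω)))) atTop
          (𝓝 (∫ x, φ x ∂(P.map (fun ω => (X₀ ω, X₀ ω)))))) := by
  haveI : SecondCountableTopology S := UniformSpace.secondCountable_of_separable S
  have hpair : ∀ d, Measurable (fun ω => (X d ω, X₀ ω)) := fun d => (hX d).prodMk hX₀
  have hpair₀ : Measurable (fun ω => (X₀ ω, X₀ ω)) := hX₀.prodMk hX₀
  constructor
  · -- in probability → in distribution
    intro h φ
    -- convergence in measure of the pairs
    have hTIM : TendstoInMeasure P (fun d ω => (X d ω, X₀ ω)) atTop (fun ω => (X₀ ω, X₀ ω)) := by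
      rw [tendstoInMeasure_iff_dist]
      intro ε hε
      have hle : ∀ d, P {ω | ε ≤ dist ((X d ω, X₀ ω)) ((X₀ ω, X₀ ω))}
          ≤ P {ω | ε / 2 < dist (X d ω) (X₀ ω)} := by
        intro d
        apply measure_mono
        intro ω hω
        simp only [Set.mem_setOf_eq, Prod.dist_eq, dist_self] at hω ⊢
        have : ε ≤ dist (X d ω) (X₀ ω) := le_trans hω (by simp [max_le_iff])
        linarith
      exact tendsto_of_tendsto_of_tendsto_of_le_of_le tendsto_const_nhds
        (h (ε / 2) (by positivity)) (fun d => bot_le) hle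
    rw [integral_map (hpair₀.aemeasurable) (φ.continuous.measurable.aestronglyMeasurable)]
    apply tendsto_of_subseq_tendsto
    intro ns hns
    have hTIM' : TendstoInMeasure P (fun i ω => (X (ns i) ω, X₀ ω)) atTop
        (fun ω => (X₀ ω, X₀ ω)) := fun ε hε => (hTIM ε hε).comp hns
    obtain ⟨ms, _, hae⟩ := hTIM'.exists_seq_tendsto_ae
    refine ⟨ms, ?_⟩
    have : ∀ i, ∫ x, φ x ∂(P.map (fun ω => (X (ns (ms i)) ω, X₀ ω)))
        = ∫ ω, φ (X (ns (ms i)) ω, X₀ ω) ∂P := fun i =>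
      integral_map ((hpair _).aemeasurable) (φ.continuous.measurable.aestronglyMeasurable)
    simp only [this]
    apply tendsto_integral_of_dominated_convergence (fun _ => ‖φ‖)
    · exact fun i => (φ.continuous.measurable.comp (hpair _)).aestronglyMeasurable
    · exact integrable_const _
    · exact fun i => Filter.Eventually.of_forall fun ω => φ.norm_coe_le_norm _
    · filter_upwards [hae] with ω hω
      exact (φ.continuous.tendsto _).comp hω
  · -- in distribution → in probability
    intro h ε hε
    set μs : ℕ → ProbabilityMeasure (S × S) := fun d =>
      ⟨P.map (fun ω => (X d ω, X₀ ω)), Measure.isProbabilityMeasure_map (hpair d).aemeasurable⟩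
    set μ : ProbabilityMeasure (S × S) :=
      ⟨P.map (fun ω => (X₀ ω, X₀ ω)), Measure.isProbabilityMeasure_map hpair₀.aemeasurable⟩
    have hlim : Tendsto μs atTop (𝓝 μ) :=
      ProbabilityMeasure.tendsto_iff_forall_integral_tendsto.mpr h
    have F_closed : IsClosed {p : S × S | ε ≤ dist p.1 p.2} :=
      isClosed_le continuous_const (continuous_fst.dist continuous_snd)
    have hμF : (μ : Measure (S × S)) {p : S × S | ε ≤ dist p.1 p.2} = 0 := by
      show (P.map (fun ω => (X₀ ω, X₀ ω))) _ = 0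
      rw [Measure.map_apply hpair₀ F_closed.measurableSet]
      convert measure_empty (μ := P)
      ext ω
      simp [hε.not_ge]
    have hlimsup := ProbabilityMeasure.limsup_measure_closed_le_of_tendsto hlim F_closed
    rw [hμF] at hlimsup
    have htendsF : Tendsto (fun d => (μs d : Measure (S × S)) {p : S × S | ε ≤ dist p.1 p.2})
        atTop (𝓝 0) := by
      refine tendsto_of_le_liminf_of_limsup_le ?_ hlimsup
      simp
    have hle : ∀ d, P {ω | ε < dist (X d ω) (X₀ ω)}
        ≤ (μs d : Measure (S × S)) {p : S × S | ε ≤ dist p.1 p.2} := by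
      intro d
      show _ ≤ (P.map (fun ω => (X d ω, X₀ ω))) _
      rw [Measure.map_apply (hpair d) F_closed.measurableSet]
      refine measure_mono fun ω hω => ?_
      simp only [Set.mem_preimage, Set.mem_setOf_eq] at hω ⊢
      exact hω.le
    exact tendsto_of_tendsto_of_tendsto_of_le_of_le tendsto_const_nhds htendsF
      (fun d => bot_le) hle
end

section
/- Let E be a separable Banach space, let (ξ_n) be a sequence of independent standard real Gaussian random variables on a probability space (Ω,P), and let (f_n) be a sequence in E. Assume that the partial sums S_N = Σ_{n≤N} ξ_n f_n converge almost surely in E to a random element X of E. Then the support of the law of X equals the closure in E of the linear span of {f_n : n ∈ ℕ}. -/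
open MeasureTheory ProbabilityTheory Filter Topology
open scoped ENNReal NNReal


lemma gauss_open_pos {s : Set ℝ} (hs : IsOpen s) (hne : s.Nonempty) :
    0 < gaussianReal 0 1 s := by
  rw [gaussianReal_apply 0 (by norm_num) s]
  by_contra h
  push_neg at h
  have h0 : ∫⁻ x in s, gaussianPDF 0 1 x = 0 := le_antisymm h (by simp)
  rw [lintegral_eq_zero_iff (measurable_gaussianPDF 0 1)] at h0
  have hvol : (volume : Measure ℝ) s = 0 := by
    have : ∀ᵐ x ∂(volume.restrict s), False := by
      filter_upwards [h0] with x hx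
      exact absurd hx (gaussianPDF_pos 0 (by norm_num) x).ne'
    simpa [ae_iff, Measure.restrict_apply MeasurableSet.univ] using this
  exact absurd hvol (hs.measure_pos volume hne).ne'

lemma tail_event_measurable {Ω : Type} [mΩ : MeasurableSpace Ω]
    {E : Type} [NormedAddCommGroup E] [NormedSpace ℝ E] [CompleteSpace E]
    [TopologicalSpace.SeparableSpace E] [MeasurableSpace E] [BorelSpace E]
    (T : ℕ → Ω → E) (hT : ∀ M, Measurable (T M)) (ε : ℝ) :
    MeasurableSet {ω | ∃ y : E, ‖y‖ < ε ∧ Tendsto (fun M => T M ω) atTop (𝓝 y)} := by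
  have hset : {ω | ∃ y : E, ‖y‖ < ε ∧ Tendsto (fun M => T M ω) atTop (𝓝 y)}
      = {ω | ∃ y : E, Tendsto (fun M => T M ω) atTop (𝓝 y)}
        ∩ ⋃ (q : ℚ) (_ : (q : ℝ) < ε), {ω | ∀ᶠ M in atTop, ‖T M ω‖ ≤ (q : ℝ)} := by
    ext ω
    simp only [Set.mem_setOf_eq, Set.mem_inter_iff, Set.mem_iUnion]
    constructor
    · rintro ⟨y, hy, hty⟩
      obtain ⟨q, hq1, hq2⟩ := exists_rat_btwn hy
      exact ⟨⟨y, hty⟩, q, hq2, (hty.norm.eventually_lt_const hq1).mono fun M h => h.le⟩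
    · rintro ⟨⟨y, hty⟩, q, hq, hev⟩
      exact ⟨y, lt_of_le_of_lt (le_of_tendsto hty.norm hev) hq, hty⟩
  rw [hset]
  refine MeasurableSet.inter ?_ ?_
  · exact measurableSet_exists_tendsto hT
  · refine MeasurableSet.iUnion fun q => MeasurableSet.iUnion fun _ => ?_
    simp only [eventually_atTop, Set.setOf_exists, Set.setOf_forall]
    refine MeasurableSet.iUnion fun K => ?_
    refine MeasurableSet.iInter fun M => MeasurableSet.iInter fun _ => ?_
    exact measurableSet_le ((hT M).norm) measurable_const

@[reducible] private def mComap {Ω : Type} (ξ : ℕ → Ω → ℝ) (i : ℕ) : MeasurableSpace Ω :=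
  MeasurableSpace.comap (ξ i) inferInstance

@[reducible] private def mTail {Ω : Type} (ξ : ℕ → Ω → ℝ) (N : ℕ) : MeasurableSpace Ω :=
  ⨆ i ∈ {i : ℕ | N < i}, mComap ξ i


/-- The (topological) support of a Borel measure: the set of points all of whose open
neighborhoods have positive measure. -/
def measureSupport {E : Type} [TopologicalSpace E] [MeasurableSpace E] (μ : Measure E) :
    Set E :=
  {x | ∀ U : Set E, IsOpen U → x ∈ U → 0 < μ U}

/-- Let `E` be a separable Banach space, `(ξ_n)` independent standard real Gaussian variables
and `(f_n)` a sequence in `E` such that the partial sums `S_N = ∑_{n ≤ N} ξ_n f_n` converge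
almost surely in `E` to a random element `X`.  Then the support of the law of `X` is the
closed linear span of `{f_n}`. -/
theorem support_of_gaussian_series
    {E : Type} [NormedAddCommGroup E] [NormedSpace ℝ E] [CompleteSpace E]
    [TopologicalSpace.SeparableSpace E] [MeasurableSpace E] [BorelSpace E]
    {Ω : Type} [MeasurableSpace Ω] (P : Measure Ω) [IsProbabilityMeasure P]
    (ξ : ℕ → Ω → ℝ) (hξmeas : ∀ n, Measurable (ξ n))
    (hξindep : ProbabilityTheory.iIndepFun ξ P)
    (hξgauss : ∀ n, P.map (ξ n) = gaussianReal 0 1)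
    (f : ℕ → E) (X : Ω → E) (hXmeas : Measurable X)
    (hconv : ∀ᵐ ω ∂P, Tendsto (fun N => ∑ n ∈ Finset.range (N + 1), ξ n ω • f n)
      atTop (𝓝 (X ω))) :
    measureSupport (P.map X) =
      closure (↑(Submodule.span ℝ (Set.range f)) : Set E) := by
  classical
  set S : ℕ → Ω → E := fun N ω => ∑ n ∈ Finset.range (N + 1), ξ n ω • f n with hSdef
  have hsmul_meas : ∀ n, Measurable fun ω => ξ n ω • f n := fun n =>
    ((continuous_id.smul continuous_const).measurable).comp (hξmeas n)
  have hSmeas : ∀ N, Measurable (S N) := fun N =>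
    Finset.measurable_sum _ fun n _ => hsmul_meas n
  set C : Set Ω := {ω | Tendsto (fun N => S N ω) atTop (𝓝 (X ω))} with hCdef
  have hCnull : P Cᶜ = 0 := by
    have := ae_iff.mp hconv
    simpa [hCdef, Set.compl_setOf] using this
  -- the key positivity statement
  have key : ∀ x ∈ Submodule.span ℝ (Set.range f), ∀ ε : ℝ, 0 < ε →
      0 < P {ω | dist (X ω) x < ε} := by
    intro x hx ε hε
    obtain ⟨c, hc⟩ := Finsupp.mem_span_range_iff_exists_finsupp.mp hx
    set ε' := ε / 2 with hε'def
    have hε' : 0 < ε' := by positivity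
    set T : ℕ → ℕ → Ω → E := fun N M ω => ∑ n ∈ Finset.Ico (N + 1) (M + 1), ξ n ω • f n
      with hTdef
    set A : ℕ → Set Ω := fun N =>
      {ω | ∃ y : E, ‖y‖ < ε' ∧ Tendsto (fun M => T N M ω) atTop (𝓝 y)} with hAdef
    have hST : ∀ N M ω, N ≤ M → S M ω = S N ω + T N M ω := by
      intro N M ω hNM
      have := Finset.sum_Ico_consecutive (fun n => ξ n ω • f n)
        (Nat.zero_le (N + 1)) (Nat.succ_le_succ hNM)
      simp only [hSdef, hTdef, Finset.range_eq_Ico]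
      exact this.symm
    have htail : ∀ N, ∀ ω ∈ C, Tendsto (fun M => T N M ω) atTop (𝓝 (X ω - S N ω)) := by
      intro N ω hω
      have h1 : Tendsto (fun M => S M ω - S N ω) atTop (𝓝 (X ω - S N ω)) :=
        (hω : Tendsto _ _ _).sub_const _
      refine h1.congr' ?_
      filter_upwards [eventually_ge_atTop N] with M hM
      rw [hST N M ω hM]; abel
    -- choose N
    obtain ⟨N, hNM₀, hAN⟩ : ∃ N, (∀ n ∈ c.support, n < N + 1) ∧ 0 < P (A N) := by
      have hmeasIn : TendstoInMeasure P S atTop X :=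
        tendstoInMeasure_of_tendsto_ae (fun N => (hSmeas N).aestronglyMeasurable) hconv
      have h2 := (tendstoInMeasure_iff_dist.mp hmeasIn ε' hε').eventually_lt_const (by norm_num : (0 : ENNReal) < 1)
      set M₀ := c.support.sup id with hM₀def
      obtain ⟨N, hN1, hN2⟩ := (h2.and (eventually_ge_atTop M₀)).exists
      refine ⟨N, fun n hn => ?_, ?_⟩
      · exact Nat.lt_succ_of_le (le_trans (Finset.le_sup (f := id) hn) hN2)
      · have hdm : MeasurableSet {ω | ε' ≤ dist (S N ω) (X ω)} :=
          measurableSet_le measurable_const ((hSmeas N).dist hXmeas)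
        have hlt : 0 < P {ω | dist (S N ω) (X ω) < ε'} := by
          have hcompl : {ω | dist (S N ω) (X ω) < ε'} = {ω | ε' ≤ dist (S N ω) (X ω)}ᶜ := by
            ext ω; simp [not_le]
          rw [hcompl, prob_compl_eq_one_sub hdm]
          exact tsub_pos_iff_lt.mpr hN1
        have hsub : {ω | dist (S N ω) (X ω) < ε'} ∩ C ⊆ A N := by
          rintro ω ⟨hd, hωC⟩
          refine ⟨X ω - S N ω, ?_, htail N ω hωC⟩
          rw [← dist_eq_norm']
          exact hd
        have : P {ω | dist (S N ω) (X ω) < ε'} ≤ P (A N) + P Cᶜ := by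
          calc P {ω | dist (S N ω) (X ω) < ε'}
              ≤ P (({ω | dist (S N ω) (X ω) < ε'} ∩ C) ∪ Cᶜ) := by
                refine measure_mono fun ω hω => ?_
                by_cases hωC : ω ∈ C
                · exact Or.inl ⟨hω, hωC⟩
                · exact Or.inr hωC
            _ ≤ P ({ω | dist (S N ω) (X ω) < ε'} ∩ C) + P Cᶜ := measure_union_le _ _
            _ ≤ P (A N) + P Cᶜ := add_le_add (measure_mono hsub) le_rfl
        rw [hCnull, add_zero] at this
        exact lt_of_lt_of_le hlt this
    -- the finite-dimensional event
    have hxval : ∑ n ∈ Finset.range (N + 1), c n • f n = x := by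
      rw [← hc, Finsupp.sum]
      refine (Finset.sum_subset (fun n hn => Finset.mem_range.mpr (hNM₀ n hn)) ?_).symm
      intro i _ hi
      simp [Finsupp.notMem_support_iff.mp hi]
    set K := ∑ n ∈ Finset.range (N + 1), ‖f n‖ with hKdef
    have hK0 : 0 ≤ K := Finset.sum_nonneg fun n _ => norm_nonneg _
    set δ := ε' / (K + 1) with hδdef
    have hδ : 0 < δ := by positivity
    set B := ⋂ i ∈ Finset.range (N + 1), ξ i ⁻¹' Metric.ball (c i) δ with hBdef
    have hBS : ∀ ω ∈ B, ‖S N ω - x‖ < ε' := by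
      intro ω hω
      have hω' : ∀ i ∈ Finset.range (N + 1), |ξ i ω - c i| < δ := by
        intro i hi
        have := Set.mem_iInter₂.mp hω i hi
        simpa [Real.dist_eq] using this
      have heq : S N ω - x = ∑ n ∈ Finset.range (N + 1), (ξ n ω - c n) • f n := by
        rw [← hxval, ← Finset.sum_sub_distrib]
        simp [sub_smul]
      rw [heq]
      calc ‖∑ n ∈ Finset.range (N + 1), (ξ n ω - c n) • f n‖
          ≤ ∑ n ∈ Finset.range (N + 1), ‖(ξ n ω - c n) • f n‖ := norm_sum_le _ _
        _ ≤ ∑ n ∈ Finset.range (N + 1), δ * ‖f n‖ := by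
            refine Finset.sum_le_sum fun n hn => ?_
            rw [norm_smul, Real.norm_eq_abs]
            exact mul_le_mul_of_nonneg_right (hω' n hn).le (norm_nonneg _)
        _ = δ * K := by rw [← Finset.mul_sum]
        _ < δ * (K + 1) := by nlinarith
        _ = ε' := by rw [hδdef]; exact div_mul_cancel₀ _ (by linarith)
    -- independence
    have hIndep : Indep (⨆ i ∈ {i : ℕ | i ≤ N}, mComap ξ i) (mTail ξ N) P := by
      refine indep_iSup_of_disjoint (fun i => (hξmeas i).comap_le) hξindep.iIndep ?_
      rw [Set.disjoint_left]
      intro i hi hi'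
      simp only [Set.mem_setOf_eq] at hi hi'
      omega
    have hBmeas : MeasurableSet[⨆ i ∈ {i : ℕ | i ≤ N}, mComap ξ i] B := by
      refine MeasurableSet.biInter (Finset.range (N + 1)).countable_toSet fun i hi => ?_
      have hi' : i ≤ N := Nat.lt_succ_iff.mp (Finset.mem_range.mp hi)
      have hmi : MeasurableSet[mComap ξ i] (ξ i ⁻¹' Metric.ball (c i) δ) :=
        ⟨Metric.ball (c i) δ, measurableSet_ball, rfl⟩
      exact (le_iSup₂ (f := fun i (_ : i ∈ {i : ℕ | i ≤ N}) => mComap ξ i) i hi') _ hmi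
    have hξm₂ : ∀ n, N < n → Measurable[mTail ξ N] (ξ n) := by
      intro n hn
      rw [measurable_iff_comap_le]
      exact le_iSup₂ (f := fun i (_ : i ∈ {i : ℕ | N < i}) => mComap ξ i) n hn
    have hTmeas : ∀ M, Measurable[mTail ξ N] (fun ω => T N M ω) := by
      intro M
      refine Finset.measurable_sum _ fun n hn => ?_
      have hn' : N < n := Nat.lt_of_succ_le (Finset.mem_Ico.mp hn).1
      exact ((continuous_id.smul continuous_const).measurable).comp (hξm₂ n hn')
    have hAmeas : MeasurableSet[mTail ξ N] (A N) :=
      tail_event_measurable (mΩ := mTail ξ N) (fun M => T N M) hTmeas ε'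
    have hBA : P (B ∩ A N) = P B * P (A N) :=
      (Indep_iff _ _ _).mp hIndep B (A N) hBmeas hAmeas
    have hPB : 0 < P B := by
      have := hξindep.meas_biInter (S := Finset.range (N + 1))
        (s := fun i => ξ i ⁻¹' Metric.ball (c i) δ)
        (fun i _ => ⟨Metric.ball (c i) δ, measurableSet_ball, rfl⟩)
      rw [hBdef, this]
      refine CanonicallyOrderedAdd.prod_pos.mpr fun i _ => ?_
      have hmap : P (ξ i ⁻¹' Metric.ball (c i) δ) = (P.map (ξ i)) (Metric.ball (c i) δ) :=
        (Measure.map_apply (hξmeas i) measurableSet_ball).symm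
      rw [hmap, hξgauss i]
      exact gauss_open_pos Metric.isOpen_ball ⟨c i, Metric.mem_ball_self hδ⟩
    -- conclusion
    have hsub : B ∩ A N ∩ C ⊆ {ω | dist (X ω) x < ε} := by
      rintro ω ⟨⟨hωB, y, hy, hty⟩, hωC⟩
      have hyX : y = X ω - S N ω := tendsto_nhds_unique hty (htail N ω hωC)
      have : X ω - x = (S N ω - x) + y := by rw [hyX]; abel
      show dist (X ω) x < ε
      rw [dist_eq_norm, this]
      calc ‖(S N ω - x) + y‖ ≤ ‖S N ω - x‖ + ‖y‖ := norm_add_le _ _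
        _ < ε' + ε' := add_lt_add (hBS ω hωB) hy
        _ = ε := by rw [hε'def]; ring
    have hBAC : 0 < P (B ∩ A N ∩ C) := by
      have h1 : P (B ∩ A N) ≤ P (B ∩ A N ∩ C) + P Cᶜ := by
        calc P (B ∩ A N) ≤ P ((B ∩ A N ∩ C) ∪ Cᶜ) := by
              refine measure_mono fun ω hω => ?_
              by_cases hωC : ω ∈ C
              · exact Or.inl ⟨hω, hωC⟩
              · exact Or.inr hωC
          _ ≤ P (B ∩ A N ∩ C) + P Cᶜ := measure_union_le _ _
      rw [hCnull, add_zero] at h1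
      calc (0 : ℝ≥0∞) < P B * P (A N) := ENNReal.mul_pos hPB.ne' hAN.ne'
        _ = P (B ∩ A N) := hBA.symm
        _ ≤ P (B ∩ A N ∩ C) := h1
    exact lt_of_lt_of_le hBAC (measure_mono hsub)
  -- now the two inclusions
  apply Set.Subset.antisymm
  · intro x hx
    by_contra hx'
    have hopen : IsOpen ((closure (↑(Submodule.span ℝ (Set.range f)) : Set E))ᶜ) :=
      isClosed_closure.isOpen_compl
    have hpos := hx _ hopen hx'
    have hzero : (P.map X) ((closure (↑(Submodule.span ℝ (Set.range f)) : Set E))ᶜ) = 0 := by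
      rw [Measure.map_apply hXmeas hopen.measurableSet]
      refine measure_mono_null ?_ hCnull
      intro ω hω
      simp only [Set.mem_preimage, Set.mem_compl_iff] at hω
      intro hωC
      refine hω ?_
      refine isClosed_closure.mem_of_tendsto (hωC : Tendsto (fun N => S N ω) atTop (𝓝 (X ω)))
        (Filter.Eventually.of_forall fun N => subset_closure ?_)
      exact Submodule.sum_mem _ fun n _ =>
        Submodule.smul_mem _ _ (Submodule.subset_span ⟨n, rfl⟩)
    rw [hzero] at hpos
    exact lt_irrefl _ hpos
  · intro y hy
    intro U hU hyU
    obtain ⟨ε, hε, hball⟩ := Metric.isOpen_iff.mp hU y hyU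
    obtain ⟨x, hxmem, hxy⟩ := Metric.mem_closure_iff.mp hy (ε / 2) (by positivity)
    rw [Measure.map_apply hXmeas hU.measurableSet]
    refine lt_of_lt_of_le (key x hxmem (ε / 2) (by positivity)) (measure_mono ?_)
    intro ω hω
    apply hball
    have : dist (X ω) y < ε := by
      calc dist (X ω) y ≤ dist (X ω) x + dist x y := dist_triangle _ _ _
        _ < ε / 2 + ε / 2 := add_lt_add hω (by rwa [dist_comm] at hxy)
        _ = ε := by ring
    exact this
end

section
/- Let U ⊆ ℝ^m be open, r ≥ 1, and let X be a centered Gaussian process on U with values in ℝ^k, defined on a probability space (Ω,P), with almost surely C^r sample paths. Let v ∈ ℝ^m. Then the directional derivative process vX, defined almost surely by (vX)(p) = D_v X(p) (the derivative of the sample path at p in direction v), is a centered Gaussian process on U with almost surely C^{r−1} sample paths; in particular, for any finitely many points p₁,…,p_j ∈ U the random vector ((vX)(p₁),…,(vX)(p_j)) is centered Gaussian. -/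
open MeasureTheory ProbabilityTheory Filter Topology

section Helpers

open Real
open scoped NNReal ENNReal

private lemma map_sqrt_mul_gaussian (v : ℝ≥0) :
    (gaussianReal 0 1).map (fun x => Real.sqrt v * x) = gaussianReal 0 v := by
  have h := gaussianReal_map_const_mul (μ := 0) (v := 1) (Real.sqrt v)
  simp only [mul_zero, mul_one] at h
  have : (⟨Real.sqrt v ^ 2, sq_nonneg _⟩ : ℝ≥0) = v := by
    ext; simp [Real.sq_sqrt v.2]
  convert h using 2
  ext; simp [Real.sq_sqrt v.2]

private lemma integral_exp_neg_mul_sq_gaussian1 {v : ℝ} (hv : 0 ≤ v) :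
    ∫ x, rexp (-(v * x ^ 2) / 2) ∂(gaussianReal 0 1) = (Real.sqrt (1 + v))⁻¹ := by
  rw [gaussianReal_of_var_ne_zero 0 one_ne_zero]
  have hpdf : (gaussianPDF 0 1) = fun x => ((gaussianPDFReal 0 1 x).toNNReal : ℝ≥0∞) := by
    ext x; rw [gaussianPDF, ENNReal.ofReal]
  rw [hpdf, integral_withDensity_eq_integral_smul
    (measurable_gaussianPDFReal 0 1).real_toNNReal]
  have heq : ∀ x : ℝ, (gaussianPDFReal 0 1 x).toNNReal • rexp (-(v * x ^ 2) / 2)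
      = (Real.sqrt (2 * π))⁻¹ * rexp (-((1 + v) / 2) * x ^ 2) := by
    intro x
    rw [NNReal.smul_def, smul_eq_mul, Real.coe_toNNReal _ (gaussianPDFReal_nonneg 0 1 x),
      gaussianPDFReal]
    push_cast
    rw [mul_one, mul_assoc, ← Real.exp_add]
    ring_nf
  simp_rw [heq]
  rw [MeasureTheory.integral_const_mul, integral_gaussian]
  have h1v : 0 < 1 + v := by linarith
  rw [div_div_eq_mul_div, Real.sqrt_div (by positivity : (0:ℝ) ≤ π * 2)]
  have h2 : Real.sqrt (π * 2) = Real.sqrt (2 * π) := by ring_nf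
  rw [h2, div_eq_mul_inv, ← mul_assoc, inv_mul_cancel₀
    (by positivity : Real.sqrt (2*π) ≠ 0), one_mul]

private lemma integral_exp_neg_sq_gaussian (v : ℝ≥0) :
    ∫ x, rexp (-(x ^ 2) / 2) ∂(gaussianReal 0 v) = (Real.sqrt (1 + v))⁻¹ := by
  rw [← map_sqrt_mul_gaussian v,
    integral_map (by fun_prop) (Continuous.aestronglyMeasurable (by continuity))]
  have : ∀ x : ℝ, rexp (-((Real.sqrt v * x) ^ 2) / 2) = rexp (-((v:ℝ) * x ^ 2) / 2) := by
    intro x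
    congr 2
    rw [mul_pow, Real.sq_sqrt (NNReal.coe_nonneg v)]
  simp_rw [this]
  exact integral_exp_neg_mul_sq_gaussian1 v.2

/-- An a.s. limit of centered Gaussian real random variables is centered Gaussian. -/
private lemma gaussian_of_tendsto {Ω : Type} [MeasurableSpace Ω] (P : Measure Ω)
    [IsProbabilityMeasure P]
    (Y : ℕ → Ω → ℝ) (Z : Ω → ℝ) (w : ℕ → ℝ≥0)
    (hY : ∀ n, P.map (Y n) = gaussianReal 0 (w n))
    (hlim : ∀ᵐ ω ∂P, Tendsto (fun n => Y n ω) atTop (𝓝 (Z ω))) :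
    ∃ W : ℝ≥0, P.map Z = gaussianReal 0 W := by
  have hYm : ∀ n, AEMeasurable (Y n) P := fun n =>
    aemeasurable_of_map_neZero (by rw [hY n]; infer_instance)
  have hZm : AEMeasurable Z P := aemeasurable_of_tendsto_metrizable_ae' hYm hlim
  -- dominated convergence for bounded continuous test functions
  have hInt : ∀ (g : ℝ → ℝ), Continuous g → ∀ C : ℝ, (∀ x, |g x| ≤ C) →
      Tendsto (fun n => ∫ ω, g (Y n ω) ∂P) atTop (𝓝 (∫ ω, g (Z ω) ∂P)) := by
    intro g hg C hC
    refine tendsto_integral_of_dominated_convergence (fun _ => C)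
      (fun n => (hg.measurable.comp_aemeasurable (hYm n)).aestronglyMeasurable)
      (integrable_const C) (fun n => ?_) ?_
    · filter_upwards with ω using (Real.norm_eq_abs _ ▸ hC (Y n ω))
    · filter_upwards [hlim] with ω hω using (hg.tendsto _).comp hω
  have hint_g : ∀ (g : ℝ → ℝ), Continuous g → ∀ n,
      ∫ ω, g (Y n ω) ∂P = ∫ x, g x ∂(gaussianReal 0 (w n)) := by
    intro g hg n
    rw [← hY n, integral_map (hYm n) hg.aestronglyMeasurable]
  -- the special test function exp(-x^2/2)
  set e : ℝ → ℝ := fun x => rexp (-(x ^ 2) / 2) with he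
  have hec : Continuous e := by continuity
  have heb : ∀ x, |e x| ≤ 1 := by
    intro x
    rw [abs_of_pos (Real.exp_pos _)]
    exact Real.exp_le_one_iff.2 (by nlinarith [sq_nonneg x])
  set L : ℝ := ∫ ω, e (Z ω) ∂P with hL
  have hL1 : Tendsto (fun n => (Real.sqrt (1 + (w n : ℝ)))⁻¹) atTop (𝓝 L) := by
    have := hInt e hec 1 heb
    convert this using 2 with n
    rw [hint_g e hec n, integral_exp_neg_sq_gaussian]
  have hLpos : 0 < L := by
    rw [hL]
    rw [integral_pos_iff_support_of_nonneg (fun ω => (Real.exp_pos _).le)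
      (Integrable.mono' (integrable_const 1)
        (hec.measurable.comp_aemeasurable hZm).aestronglyMeasurable
        (Filter.Eventually.of_forall fun ω => by
          rw [Real.norm_eq_abs]; exact heb (Z ω)))]
    have : Function.support (fun ω => e (Z ω)) = Set.univ := by
      ext ω; simp [he, Function.support, (Real.exp_pos _).ne']
    rw [this]
    simp
  -- convergence of variances
  have hsq : Tendsto (fun n => Real.sqrt (1 + (w n : ℝ))) atTop (𝓝 L⁻¹) := by
    have := (hL1.inv₀ hLpos.ne')
    simpa using this
  have hwlim : Tendsto (fun n => ((w n : ℝ))) atTop (𝓝 (L⁻¹ * L⁻¹ - 1)) := by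
    have h2 : Tendsto (fun n => Real.sqrt (1 + (w n : ℝ)) * Real.sqrt (1 + (w n : ℝ)))
        atTop (𝓝 (L⁻¹ * L⁻¹)) := hsq.mul hsq
    have h3 : ∀ n, Real.sqrt (1 + (w n : ℝ)) * Real.sqrt (1 + (w n : ℝ)) = 1 + (w n : ℝ) :=
      fun n => Real.mul_self_sqrt (by positivity)
    simp_rw [h3] at h2
    have := h2.sub_const 1
    simpa using this
  have hWr : 0 ≤ L⁻¹ * L⁻¹ - 1 := ge_of_tendsto' hwlim (fun n => (w n).2)
  set W : ℝ≥0 := (L⁻¹ * L⁻¹ - 1).toNNReal with hWdef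
  have hW : (W : ℝ) = L⁻¹ * L⁻¹ - 1 := Real.coe_toNNReal _ hWr
  have key : ∀ g : ℝ → ℝ, Continuous g → ∀ C : ℝ, (∀ x, |g x| ≤ C) →
      ∫ x, g x ∂(P.map Z) = ∫ x, g x ∂(gaussianReal 0 W) := by
    intro g hg C hC
    have hrw : ∀ u : ℝ≥0, ∫ x, g x ∂(gaussianReal 0 u)
        = ∫ x, g (Real.sqrt u * x) ∂(gaussianReal 0 1) := by
      intro u
      rw [← map_sqrt_mul_gaussian u,
        integral_map (by fun_prop) hg.aestronglyMeasurable]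
    have h1 : Tendsto (fun n => ∫ x, g x ∂(gaussianReal 0 (w n))) atTop
        (𝓝 (∫ x, g x ∂(gaussianReal 0 W))) := by
      simp_rw [hrw]
      refine tendsto_integral_of_dominated_convergence (fun _ => C)
        (fun n => (hg.comp (continuous_const.mul continuous_id)).aestronglyMeasurable)
        (integrable_const C)
        (fun n => Filter.Eventually.of_forall fun x => by
          rw [Real.norm_eq_abs]; exact hC _) ?_
      refine Filter.Eventually.of_forall fun x => ?_
      have hs : Tendsto (fun n => Real.sqrt (w n) * x) atTop (𝓝 (Real.sqrt W * x)) := by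
        apply Tendsto.mul_const
        have h4 := (Real.continuous_sqrt.tendsto (L⁻¹ * L⁻¹ - 1)).comp hwlim
        rw [← hW] at h4
        exact h4
      exact (hg.tendsto _).comp hs
    have h2 : Tendsto (fun n => ∫ x, g x ∂(gaussianReal 0 (w n))) atTop
        (𝓝 (∫ x, g x ∂(P.map Z))) := by
      rw [integral_map hZm hg.aestronglyMeasurable]
      have h5 := hInt g hg C hC
      have h6 : ∀ n, ∫ ω, g (Y n ω) ∂P = ∫ x, g x ∂(gaussianReal 0 (w n)) :=
        hint_g g hg
      simp_rw [h6] at h5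
      exact h5
    exact tendsto_nhds_unique h2 h1
  haveI : IsProbabilityMeasure (P.map Z) := Measure.isProbabilityMeasure_map hZm
  refine ⟨W, ?_⟩
  apply ext_of_forall_lintegral_eq_of_IsFiniteMeasure
  intro f
  have hfc : Continuous (fun x : ℝ => ((f x : ℝ≥0) : ℝ)) :=
    NNReal.continuous_coe.comp f.continuous
  obtain ⟨C, hC⟩ := f.bounded
  set Cb : ℝ := ((f 0 : ℝ≥0) : ℝ) + C with hCb
  have hfb : ∀ x : ℝ, |((f x : ℝ≥0) : ℝ)| ≤ Cb := by
    intro x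
    rw [abs_of_nonneg (f x).coe_nonneg]
    have := hC x 0
    rw [NNReal.dist_eq] at this
    have h7 := (abs_le.1 this).2
    linarith
  have hfi : ∀ (μ : Measure ℝ) [IsProbabilityMeasure μ],
      Integrable (fun x => ((f x : ℝ≥0) : ℝ)) μ := by
    intro μ _
    refine Integrable.mono' (integrable_const Cb) hfc.aestronglyMeasurable ?_
    filter_upwards with x
    rw [Real.norm_eq_abs]
    exact hfb x
  rw [lintegral_coe_eq_integral _ (hfi _), lintegral_coe_eq_integral _ (hfi _),
    key _ hfc Cb hfb]

end Helpers


/-- Let `U ⊆ ℝ^m` be open, `r ≥ 1`, and `X` a centered Gaussian process on `U` with values in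
`ℝ^k` and almost surely `C^r` sample paths.  For `v ∈ ℝ^m`, the directional derivative process
`vX(p) = D_v X(p)` has almost surely `C^{r−1}` sample paths on `U` and is again a centered
Gaussian process on `U`: all its finite-dimensional evaluations are centered Gaussian. -/
theorem directional_derivative_of_gaussian_process
    {m k : ℕ} (r : ℕ) (hr : 1 ≤ r)
    (U : Set (EuclideanSpace ℝ (Fin m))) (hU : IsOpen U)
    {Ω : Type} [MeasurableSpace Ω] (P : Measure Ω) [IsProbabilityMeasure P]
    (X : Ω → EuclideanSpace ℝ (Fin m) → Fin k → ℝ)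
    -- almost surely `C^r` sample paths on `U`
    (hpaths : ∀ᵐ ω ∂P, ContDiffOn ℝ r (X ω) U)
    -- `X` is a centered Gaussian process on `U` with values in `ℝ^k`
    (hgauss : ∀ (j : ℕ) (p : Fin j → EuclideanSpace ℝ (Fin m)), (∀ i, p i ∈ U) →
      ∀ c : Fin j → Fin k → ℝ, ∃ v : NNReal,
        P.map (fun ω => ∑ i, ∑ l, c i l * X ω (p i) l) = gaussianReal 0 v)
    (v : EuclideanSpace ℝ (Fin m)) :
    -- `vX` has almost surely `C^{r-1}` sample paths on `U`
    (∀ᵐ ω ∂P, ContDiffOn ℝ (r - 1 : ℕ) (fun p => lineDeriv ℝ (X ω) p v) U) ∧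
    -- `vX` is a centered Gaussian process on `U`
    (∀ (j : ℕ) (p : Fin j → EuclideanSpace ℝ (Fin m)), (∀ i, p i ∈ U) →
      ∀ c : Fin j → Fin k → ℝ, ∃ w : NNReal,
        P.map (fun ω => ∑ i, ∑ l, c i l * lineDeriv ℝ (X ω) (p i) v l) =
          gaussianReal 0 w) := by
  have hcast : (r : WithTop ℕ∞) = ((r - 1 : ℕ) : WithTop ℕ∞) + 1 := by
    have h0 : r - 1 + 1 = r := Nat.sub_add_cancel hr
    exact_mod_cast congrArg (Nat.cast : ℕ → WithTop ℕ∞) h0.symm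
  constructor
  · -- smoothness of the directional derivative
    filter_upwards [hpaths] with ω hω
    rw [hcast, contDiffOn_succ_iff_fderiv_of_isOpen hU] at hω
    obtain ⟨hd, -, hf⟩ := hω
    have h1 : ContDiffOn ℝ (r - 1 : ℕ) (fun p => fderiv ℝ (X ω) p v) U :=
      hf.clm_apply contDiffOn_const
    refine h1.congr fun p hp => ?_
    exact (hd.differentiableAt (hU.mem_nhds hp)).lineDeriv_eq_fderiv
  · -- gaussianity
    intro j p hp c
    -- find a sequence of step sizes keeping all points in U
    have hev : ∀ᶠ t in 𝓝 (0 : ℝ), ∀ i, p i + t • v ∈ U := by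
      rw [eventually_all]
      intro i
      have hc : Continuous (fun t : ℝ => p i + t • v) := by continuity
      have h2 : (fun t : ℝ => p i + t • v) ⁻¹' U ∈ 𝓝 (0 : ℝ) :=
        hc.continuousAt.preimage_mem_nhds (by simpa using hU.mem_nhds (hp i))
      exact h2
    obtain ⟨ε, hε, hball⟩ := Metric.eventually_nhds_iff_ball.1 hev
    set t : ℕ → ℝ := fun n => ε / (n + 2) with ht_def
    have ht_pos : ∀ n, 0 < t n := fun n => by positivity
    have ht_mem : ∀ n, ∀ i, p i + t n • v ∈ U := by
      intro n i
      refine hball (t n) ?_ i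
      rw [Metric.mem_ball, Real.dist_eq, sub_zero, abs_of_pos (ht_pos n)]
      rw [ht_def]
      calc ε / (n + 2) ≤ ε / 2 := by
            apply div_le_div_of_nonneg_left hε.le (by norm_num) (by push_cast; linarith)
        _ < ε := by linarith
    have ht0 : Tendsto t atTop (𝓝 0) := by
      have h3 : Tendsto (fun n : ℕ => ((n : ℝ) + 2)) atTop atTop := by
        apply tendsto_atTop_add_const_right
        exact tendsto_natCast_atTop_atTop
      exact Tendsto.div_atTop (tendsto_const_nhds (x := ε)) h3
    -- the approximating random variables
    set Y : ℕ → Ω → ℝ := fun n ω =>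
      ∑ i, ∑ l, c i l * ((t n)⁻¹ * (X ω (p i + t n • v) l - X ω (p i) l)) with hYdef
    set Z : Ω → ℝ := fun ω => ∑ i, ∑ l, c i l * lineDeriv ℝ (X ω) (p i) v l with hZdef
    have hYgauss : ∀ n, ∃ wv : NNReal, P.map (Y n) = gaussianReal 0 wv := by
      intro n
      set q : Fin (j + j) → EuclideanSpace ℝ (Fin m) :=
        Fin.append (fun i => p i + t n • v) p with hq
      set cc : Fin (j + j) → Fin k → ℝ :=
        Fin.append (fun i l => c i l * (t n)⁻¹) (fun i l => -(c i l * (t n)⁻¹)) with hcc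
      have hqU : ∀ i, q i ∈ U := by
        intro i
        refine Fin.addCases (fun i0 => ?_) (fun i0 => ?_) i
        · rw [hq, Fin.append_left]; exact ht_mem n i0
        · rw [hq, Fin.append_right]; exact hp i0
      obtain ⟨wv, hwv⟩ := hgauss (j + j) q hqU cc
      refine ⟨wv, ?_⟩
      rw [← hwv]
      congr 1
      funext ω
      rw [Fin.sum_univ_add]
      simp only [hq, hcc, Fin.append_left, Fin.append_right]
      rw [hYdef, ← Finset.sum_add_distrib]
      refine Finset.sum_congr rfl fun i _ => ?_
      rw [← Finset.sum_add_distrib]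
      refine Finset.sum_congr rfl fun l _ => ?_
      ring
    choose wv hwv using hYgauss
    have hconv : ∀ᵐ ω ∂P, Tendsto (fun n => Y n ω) atTop (𝓝 (Z ω)) := by
      filter_upwards [hpaths] with ω hω
      have hdiff : ∀ i : Fin j, DifferentiableAt ℝ (X ω) (p i) := by
        intro i
        refine (hω.differentiableOn ?_).differentiableAt (hU.mem_nhds (hp i))
        exact_mod_cast (Nat.one_le_iff_ne_zero.mp hr)
      have htend : ∀ i : Fin j,
          Tendsto (fun n => (t n)⁻¹ • (X ω (p i + t n • v) - X ω (p i))) atTop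
            (𝓝 (lineDeriv ℝ (X ω) (p i) v)) := by
        intro i
        have hld : HasLineDerivAt ℝ (X ω) (fderiv ℝ (X ω) (p i) v) (p i) v :=
          (hdiff i).hasFDerivAt.hasLineDerivAt v
        have hslope := hld.tendsto_slope_zero
        have htne : Tendsto t atTop (𝓝[≠] (0 : ℝ)) := by
          rw [tendsto_nhdsWithin_iff]
          exact ⟨ht0, Filter.Eventually.of_forall fun n => (ht_pos n).ne'⟩
        have h9 := hslope.comp htne
        rw [(hdiff i).lineDeriv_eq_fderiv]
        exact h9
      rw [hZdef]
      apply tendsto_finset_sum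
      intro i _
      apply tendsto_finset_sum
      intro l _
      apply Tendsto.const_mul
      have h10 := ((continuous_apply l).tendsto _).comp (htend i)
      convert h10 using 2 with n
      rfl
    obtain ⟨W, hWfin⟩ := gaussian_of_tendsto P Y Z wv hwv hconv
    exact ⟨W, hWfin⟩
end
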